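/- For every integer n ≥ m: the image under D(n−m−1) of the odd part of C(n−m−1) is the 3-dimensional span of E1, E3, E6, which has codimension 1 in the kernel of the even part of D(n), with complement spanned by mE4 − E5; and the image under D(n−m−1) of the even part of C(n−m−1) is the 2-dimensional span of O5, O6, which has codimension 1 in the kernel of the odd part of D(n), with complement spanned by O2. That is, H^{n+2}(d_∞) has dimension 1|1 for every n ≥ m, with representatives mφ^{0,1,n+1}_2 − φ^{0,0,n+2}_3 and ψ^{0,1,n+1}_3; in particular d_∞ admits nontrivial cocycles in every degree greater than m+2. -/
import Mathlib


namespace LinfCohomology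

/- Cochain conventions: for `n ≥ 0`, the even part of `C(n)` has coordinates
`E1,…,E6` (for `φ^{1,0,n+1}_1, φ^{1,0,n+1}_2, φ^{0,1,n+1}_1, φ^{0,1,n+1}_2,
φ^{0,0,n+2}_3, φ^{1,1,n}_3`) and the odd part has coordinates `O1,…,O6` (for
`ψ^{1,0,n+1}_3, ψ^{0,1,n+1}_3, ψ^{0,0,n+2}_1, ψ^{0,0,n+2}_2, ψ^{1,1,n}_1,
ψ^{1,1,n}_2`); `C(-1)` has even coordinates `E1,…,E5` and odd `O1,…,O4`. -/

/-- The even part of the coboundary operator `D(n)` of `d_∞ = ψ^{1,1,m}_1`,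
for `n ≥ 0`: `E2 ↦ O6`, `E4 ↦ -O5`, `E5 ↦ -mO5`, all other coordinates `↦ 0`. -/
def DeInf (K : Type*) [Field K] (m : ℕ) (_n : ℕ) :
    (Fin 6 → K) →ₗ[K] (Fin 6 → K) :=
  Matrix.mulVecLin
    !![0, 0, 0, 0, 0, 0;
       0, 0, 0, 0, 0, 0;
       0, 0, 0, 0, 0, 0;
       0, 0, 0, 0, 0, 0;
       0, 0, 0, -1, -(m : K), 0;
       0, 1, 0, 0, 0, 0]

/-- The odd part of the coboundary operator `D(n)` of `d_∞`, for `n ≥ 0`: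
`O1 ↦ E6`, `O3 ↦ E3`, `O4 ↦ -E1`, all other coordinates `↦ 0`. -/
def DoInf (K : Type*) [Field K] (_m : ℕ) (_n : ℕ) :
    (Fin 6 → K) →ₗ[K] (Fin 6 → K) :=
  Matrix.mulVecLin
    !![0, 0, 0, -1, 0, 0;
       0, 0, 0, 0, 0, 0;
       0, 0, 1, 0, 0, 0;
       0, 0, 0, 0, 0, 0;
       0, 0, 0, 0, 0, 0;
       1, 0, 0, 0, 0, 0]

/-- The even part of `D(-1)` of `d_∞`: `E2 ↦ O6`, `E4 ↦ -O5`, `E5 ↦ -mO5`. -/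
def DeInfNeg1 (K : Type*) [Field K] (m : ℕ) : (Fin 5 → K) →ₗ[K] (Fin 6 → K) :=
  Matrix.mulVecLin
    !![0, 0, 0, 0, 0;
       0, 0, 0, 0, 0;
       0, 0, 0, 0, 0;
       0, 0, 0, 0, 0;
       0, 0, 0, -1, -(m : K);
       0, 1, 0, 0, 0]

/-- The odd part of `D(-1)` of `d_∞`: `O1 ↦ E6`, `O3 ↦ E3`, `O4 ↦ -E1`. -/
def DoInfNeg1 (K : Type*) [Field K] (_m : ℕ) : (Fin 4 → K) →ₗ[K] (Fin 6 → K) :=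
  Matrix.mulVecLin
    !![0, 0, 0, -1;
       0, 0, 0, 0;
       0, 0, 1, 0;
       0, 0, 0, 0;
       0, 0, 0, 0;
       1, 0, 0, 0]

/-- The span of `E1, E3, E6`. -/
def SInf (K : Type*) [Field K] : Submodule K (Fin 6 → K) :=
  Submodule.span K {(![1, 0, 0, 0, 0, 0] : Fin 6 → K),
    ![0, 0, 1, 0, 0, 0], ![0, 0, 0, 0, 0, 1]}

/-- The span of `O5, O6`. -/
def TInf (K : Type*) [Field K] : Submodule K (Fin 6 → K) :=
  Submodule.span K {(![0, 0, 0, 0, 1, 0] : Fin 6 → K), ![0, 0, 0, 0, 0, 1]}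


@[simp] lemma cons_val_five' {α : Type*} {m : ℕ} (x : α) (u : Fin (m + 5) → α) :
    Matrix.vecCons x u 5 =
      Matrix.vecHead (Matrix.vecTail (Matrix.vecTail (Matrix.vecTail (Matrix.vecTail u)))) := rfl

lemma mem_SInf (K : Type*) [Field K] (a b c : K) : ![a,0,b,0,0,c] ∈ SInf K := by
  have h : (![a,0,b,0,0,c] : Fin 6 → K)
      = a • ![1,0,0,0,0,0] + b • ![0,0,1,0,0,0] + c • ![0,0,0,0,0,1] := by
    funext i; fin_cases i <;> simp
  rw [h]
  exact Submodule.add_mem _ (Submodule.add_mem _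
    (Submodule.smul_mem _ _ (Submodule.subset_span (by simp)))
    (Submodule.smul_mem _ _ (Submodule.subset_span (by simp))))
    (Submodule.smul_mem _ _ (Submodule.subset_span (by simp)))

lemma mem_TInf (K : Type*) [Field K] (a b : K) : ![0,0,0,0,a,b] ∈ TInf K := by
  have h : (![0,0,0,0,a,b] : Fin 6 → K)
      = a • ![0,0,0,0,1,0] + b • ![0,0,0,0,0,1] := by
    funext i; fin_cases i <;> simp
  rw [h]
  exact Submodule.add_mem _
    (Submodule.smul_mem _ _ (Submodule.subset_span (by simp)))
    (Submodule.smul_mem _ _ (Submodule.subset_span (by simp)))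

lemma notMem_SInf (K : Type*) [Field K] (m : ℕ) :
    (![0,0,0,(m:K),-1,0] : Fin 6 → K) ∉ SInf K := by
  intro h
  have hle : SInf K ≤ LinearMap.ker (LinearMap.proj (R := K) (φ := fun _ : Fin 6 => K) 4) := by
    rw [SInf, Submodule.span_le]
    rintro x hx
    simp only [Set.mem_insert_iff, Set.mem_singleton_iff] at hx
    rcases hx with rfl|rfl|rfl <;> simp [LinearMap.mem_ker]
  have := hle h
  simp [LinearMap.mem_ker] at this

lemma notMem_TInf (K : Type*) [Field K] :
    (![0,1,0,0,0,0] : Fin 6 → K) ∉ TInf K := by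
  intro h
  have hle : TInf K ≤ LinearMap.ker (LinearMap.proj (R := K) (φ := fun _ : Fin 6 => K) 1) := by
    rw [TInf, Submodule.span_le]
    rintro x hx
    simp only [Set.mem_insert_iff, Set.mem_singleton_iff] at hx
    rcases hx with rfl|rfl <;> simp [LinearMap.mem_ker]
  have := hle h
  simp [LinearMap.mem_ker] at this

lemma finrank_SInf (K : Type*) [Field K] : Module.finrank K (SInf K) = 3 := by
  have hg : Function.Injective (![0,2,5] : Fin 3 → Fin 6) := by decide
  have hli : LinearIndependent K
      (![![1,0,0,0,0,0], ![0,0,1,0,0,0], ![0,0,0,0,0,1]] : Fin 3 → Fin 6 → K) := by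
    have := (Pi.basisFun K (Fin 6)).linearIndependent.comp _ hg
    convert this using 1
    funext j
    fin_cases j <;> (funext i; fin_cases i <;>
      simp [Pi.basisFun_apply, Pi.single, Matrix.vecHead, Matrix.vecTail])
  have hr : Set.range (![![1,0,0,0,0,0], ![0,0,1,0,0,0], ![0,0,0,0,0,1]] : Fin 3 → Fin 6 → K)
      = {![1,0,0,0,0,0], ![0,0,1,0,0,0], ![0,0,0,0,0,1]} := by
    ext x
    constructor
    · rintro ⟨j, rfl⟩; fin_cases j <;> simp
    · rintro (rfl|rfl|rfl)
      exacts [⟨0, rfl⟩, ⟨1, rfl⟩, ⟨2, rfl⟩]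
  rw [SInf, ← hr, finrank_span_eq_card hli, Fintype.card_fin]

lemma finrank_TInf (K : Type*) [Field K] : Module.finrank K (TInf K) = 2 := by
  have hg : Function.Injective (![4,5] : Fin 2 → Fin 6) := by decide
  have hli : LinearIndependent K
      (![![0,0,0,0,1,0], ![0,0,0,0,0,1]] : Fin 2 → Fin 6 → K) := by
    have := (Pi.basisFun K (Fin 6)).linearIndependent.comp _ hg
    convert this using 1
    funext j
    fin_cases j <;> (funext i; fin_cases i <;>
      simp [Pi.basisFun_apply, Pi.single, Matrix.vecHead, Matrix.vecTail])
  have hr : Set.range (![![0,0,0,0,1,0], ![0,0,0,0,0,1]] : Fin 2 → Fin 6 → K)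
      = {![0,0,0,0,1,0], ![0,0,0,0,0,1]} := by
    ext x
    constructor
    · rintro ⟨j, rfl⟩; fin_cases j <;> simp
    · rintro (rfl|rfl)
      exacts [⟨0, rfl⟩, ⟨1, rfl⟩]
  rw [TInf, ← hr, finrank_span_eq_card hli, Fintype.card_fin]

lemma DoInf_apply (K : Type*) [Field K] (m n : ℕ) (v : Fin 6 → K) :
    DoInf K m n v = ![-(v 3), 0, v 2, 0, 0, v 0] := by
  funext i
  fin_cases i <;>
    simp [DoInf, Matrix.mulVecLin_apply, Matrix.mulVec, dotProduct, Fin.sum_univ_six]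

lemma DeInf_apply (K : Type*) [Field K] (m n : ℕ) (v : Fin 6 → K) :
    DeInf K m n v = ![0, 0, 0, 0, -(v 3) - m * v 4, v 1] := by
  funext i
  fin_cases i <;>
    simp [DeInf, Matrix.mulVecLin_apply, Matrix.mulVec, dotProduct, Fin.sum_univ_six,
      sub_eq_add_neg, mul_comm]

lemma DoInfNeg1_apply (K : Type*) [Field K] (m : ℕ) (v : Fin 4 → K) :
    DoInfNeg1 K m v = ![-(v 3), 0, v 2, 0, 0, v 0] := by
  funext i
  fin_cases i <;>
    simp [DoInfNeg1, Matrix.mulVecLin_apply, Matrix.mulVec, dotProduct, Fin.sum_univ_four]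

lemma DeInfNeg1_apply (K : Type*) [Field K] (m : ℕ) (v : Fin 5 → K) :
    DeInfNeg1 K m v = ![0, 0, 0, 0, -(v 3) - m * v 4, v 1] := by
  funext i
  fin_cases i <;>
    simp [DeInfNeg1, Matrix.mulVecLin_apply, Matrix.mulVec, dotProduct, Fin.sum_univ_five,
      sub_eq_add_neg, mul_comm]

lemma range_DoInf (K : Type*) [Field K] (m n : ℕ) :
    LinearMap.range (DoInf K m n) = SInf K := by
  apply le_antisymm
  · rintro x ⟨v, rfl⟩
    rw [DoInf_apply]
    exact mem_SInf K _ _ _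
  · rw [SInf, Submodule.span_le]
    rintro x hx
    simp only [Set.mem_insert_iff, Set.mem_singleton_iff] at hx
    rcases hx with rfl|rfl|rfl
    · exact ⟨![0,0,0,-1,0,0], by rw [DoInf_apply]; funext i; fin_cases i <;> simp⟩
    · exact ⟨![0,0,1,0,0,0], by rw [DoInf_apply]; funext i; fin_cases i <;> simp⟩
    · exact ⟨![1,0,0,0,0,0], by rw [DoInf_apply]; funext i; fin_cases i <;> simp⟩

lemma range_DoInfNeg1 (K : Type*) [Field K] (m : ℕ) :
    LinearMap.range (DoInfNeg1 K m) = SInf K := by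
  apply le_antisymm
  · rintro x ⟨v, rfl⟩
    rw [DoInfNeg1_apply]
    exact mem_SInf K _ _ _
  · rw [SInf, Submodule.span_le]
    rintro x hx
    simp only [Set.mem_insert_iff, Set.mem_singleton_iff] at hx
    rcases hx with rfl|rfl|rfl
    · exact ⟨![0,0,0,-1], by rw [DoInfNeg1_apply]; funext i; fin_cases i <;> simp⟩
    · exact ⟨![0,0,1,0], by rw [DoInfNeg1_apply]; funext i; fin_cases i <;> simp⟩
    · exact ⟨![1,0,0,0], by rw [DoInfNeg1_apply]; funext i; fin_cases i <;> simp⟩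

lemma range_DeInf (K : Type*) [Field K] (m n : ℕ) :
    LinearMap.range (DeInf K m n) = TInf K := by
  apply le_antisymm
  · rintro x ⟨v, rfl⟩
    rw [DeInf_apply]
    exact mem_TInf K _ _
  · rw [TInf, Submodule.span_le]
    rintro x hx
    simp only [Set.mem_insert_iff, Set.mem_singleton_iff] at hx
    rcases hx with rfl|rfl
    · exact ⟨![0,0,0,-1,0,0], by rw [DeInf_apply]; funext i; fin_cases i <;> simp⟩
    · exact ⟨![0,1,0,0,0,0], by rw [DeInf_apply]; funext i; fin_cases i <;> simp⟩

lemma range_DeInfNeg1 (K : Type*) [Field K] (m : ℕ) :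
    LinearMap.range (DeInfNeg1 K m) = TInf K := by
  apply le_antisymm
  · rintro x ⟨v, rfl⟩
    rw [DeInfNeg1_apply]
    exact mem_TInf K _ _
  · rw [TInf, Submodule.span_le]
    rintro x hx
    simp only [Set.mem_insert_iff, Set.mem_singleton_iff] at hx
    rcases hx with rfl|rfl
    · exact ⟨![0,0,0,-1,0], by rw [DeInfNeg1_apply]; funext i; fin_cases i <;> simp⟩
    · exact ⟨![0,1,0,0,0], by rw [DeInfNeg1_apply]; funext i; fin_cases i <;> simp⟩

lemma ker_DeInf (K : Type*) [Field K] (m n : ℕ) :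
    LinearMap.ker (DeInf K m n) =
      SInf K ⊔ Submodule.span K {(![0, 0, 0, (m : K), -1, 0] : Fin 6 → K)} := by
  apply le_antisymm
  · intro x hx
    rw [LinearMap.mem_ker, DeInf_apply] at hx
    have hx4 : -(x 3) - m * x 4 = 0 := by simpa using congrFun hx 4
    have hx1 : x 1 = 0 := by simpa using congrFun hx 5
    have hdecomp : x = ![x 0, 0, x 2, 0, 0, x 5] + (-(x 4)) • ![0,0,0,(m:K),-1,0] := by
      funext i
      fin_cases i
      · simp
      · simpa using hx1
      · simp
      · show x 3 = 0 + -(x 4) * (m : K)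
        linear_combination -hx4
      · show x 4 = 0 + -(x 4) * (-1 : K)
        ring
      · simp
    rw [hdecomp]
    exact Submodule.add_mem _ (Submodule.mem_sup_left (mem_SInf K _ _ _))
      (Submodule.mem_sup_right
        (Submodule.smul_mem _ _ (Submodule.mem_span_singleton_self _)))
  · apply sup_le
    · rw [SInf, Submodule.span_le]
      rintro x hx
      simp only [Set.mem_insert_iff, Set.mem_singleton_iff] at hx
      rcases hx with rfl|rfl|rfl <;>
        (rw [SetLike.mem_coe, LinearMap.mem_ker, DeInf_apply];
          funext i; fin_cases i <;> simp)
    · rw [Submodule.span_le]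
      rintro x hx
      simp only [Set.mem_singleton_iff] at hx
      subst hx
      rw [SetLike.mem_coe, LinearMap.mem_ker, DeInf_apply]
      funext i
      fin_cases i <;> simp

lemma ker_DoInf (K : Type*) [Field K] (m n : ℕ) :
    LinearMap.ker (DoInf K m n) =
      TInf K ⊔ Submodule.span K {(![0, 1, 0, 0, 0, 0] : Fin 6 → K)} := by
  apply le_antisymm
  · intro x hx
    rw [LinearMap.mem_ker, DoInf_apply] at hx
    have hx3 : x 3 = 0 := by simpa using congrFun hx 0
    have hx2 : x 2 = 0 := by simpa using congrFun hx 2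
    have hx0 : x 0 = 0 := by simpa using congrFun hx 5
    have hdecomp : x = ![0, 0, 0, 0, x 4, x 5] + (x 1) • ![0,1,0,0,0,0] := by
      funext i
      fin_cases i
      · simpa using hx0
      · simp
      · simpa using hx2
      · simpa using hx3
      · simp
      · simp
    rw [hdecomp]
    exact Submodule.add_mem _ (Submodule.mem_sup_left (mem_TInf K _ _))
      (Submodule.mem_sup_right
        (Submodule.smul_mem _ _ (Submodule.mem_span_singleton_self _)))
  · apply sup_le
    · rw [TInf, Submodule.span_le]
      rintro x hx
      simp only [Set.mem_insert_iff, Set.mem_singleton_iff] at hx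
      rcases hx with rfl|rfl <;>
        (rw [SetLike.mem_coe, LinearMap.mem_ker, DoInf_apply];
          funext i; fin_cases i <;> simp)
    · rw [Submodule.span_le]
      rintro x hx
      simp only [Set.mem_singleton_iff] at hx
      subst hx
      rw [SetLike.mem_coe, LinearMap.mem_ker, DoInf_apply]
      funext i
      fin_cases i <;> simp


/-- For `d_∞` and every `n ≥ m`: the image under `D(n-m-1)` of the odd part of
`C(n-m-1)` is the 3-dimensional span of `E1, E3, E6`, of codimension 1 in the
kernel of the even part of `D(n)` with complement spanned by `mE4-E5`; and the
image under `D(n-m-1)` of the even part of `C(n-m-1)` is the 2-dimensional span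
of `O5, O6`, of codimension 1 in the kernel of the odd part of `D(n)` with
complement spanned by `O2`. That is, `H^{n+2}(d_∞)` has dimension `1|1` for every
`n ≥ m`, with representatives `mφ^{0,1,n+1}_2 - φ^{0,0,n+2}_3` and
`ψ^{0,1,n+1}_3`; in particular `d_∞` admits nontrivial cocycles in every degree
greater than `m+2`. -/
theorem dInf_high_cohomology (K : Type*) [Field K] [CharZero K] (m n : ℕ)
    (hmn : m ≤ n) :
    (m = n → LinearMap.range (DoInfNeg1 K m) = SInf K ∧
      LinearMap.range (DeInfNeg1 K m) = TInf K) ∧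
    (m < n → LinearMap.range (DoInf K m (n - m - 1)) = SInf K ∧
      LinearMap.range (DeInf K m (n - m - 1)) = TInf K) ∧
    Module.finrank K (SInf K) = 3 ∧
    Module.finrank K (TInf K) = 2 ∧
    LinearMap.ker (DeInf K m n) =
      SInf K ⊔ Submodule.span K {(![0, 0, 0, (m : K), -1, 0] : Fin 6 → K)} ∧
    (![0, 0, 0, (m : K), -1, 0] : Fin 6 → K) ∉ SInf K ∧
    LinearMap.ker (DoInf K m n) =
      TInf K ⊔ Submodule.span K {(![0, 1, 0, 0, 0, 0] : Fin 6 → K)} ∧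
    (![0, 1, 0, 0, 0, 0] : Fin 6 → K) ∉ TInf K := by
  exact ⟨fun _ => ⟨range_DoInfNeg1 K m, range_DeInfNeg1 K m⟩,
    fun _ => ⟨range_DoInf K m _, range_DeInf K m _⟩,
    finrank_SInf K, finrank_TInf K, ker_DeInf K m n, notMem_SInf K m,
    ker_DoInf K m n, notMem_TInf K⟩

end LinfCohomology
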